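/- The polynomials q_{n,0}, q_{n,1}, ..., q_{n,b_n} are linearly independent over ℝ; consequently the space Q = span{q_{n,m} : m = 0, 1, ..., b_n} has dimension b_n + 1. -/

import Mathlib

/-- The polynomial `q_{n,m}` from Theorem 2.2 (Li–Zhang):
`q_{n,m} = ∑_{τ(γ₁,…,γ_d)=m} (∏_{i,j} c_{i,j}^{γ_{i,j}}/γ_{i,j}!) · x₁^{|γ₁|} ⋯ x_d^{|γ_d|}`,
where `τ(γ₁,…,γ_d) = ∑_j b_j ∑_i γ_{i,j}`.  Since every `b_j ≥ 1`, every solution of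
`τ(γ) = m` satisfies `γ_{i,j} ≤ m`, so the sum below ranges over all solutions. -/
noncomputable def qPoly (d n : ℕ) (b : Fin n → ℕ) (c : Fin d → Fin n → ℝ) (m : ℕ) :
    MvPolynomial (Fin d) ℝ :=
  ∑ γ ∈ (Finset.Icc (0 : Fin d → Fin n → ℕ) fun _ _ => m).filter
      (fun γ => ∑ j, b j * ∑ i, γ i j = m),
    MvPolynomial.C (∏ i, ∏ j, c i j ^ γ i j / ((γ i j).factorial : ℝ)) *
      ∏ i, MvPolynomial.X i ^ (∑ j, γ i j)

private lemma C_prod' {ι : Type*} (s : Finset ι) (f : ι → ℝ) :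
    ∏ x ∈ s, Polynomial.C (f x) = Polynomial.C (∏ x ∈ s, f x) :=
  (map_prod (Polynomial.C : ℝ →+* Polynomial ℝ) f s).symm

private lemma qPoly_coeff (d n : ℕ) (b : Fin n → ℕ) (c : Fin d → Fin n → ℝ)
    (j0 : Fin n) (m k : ℕ) :
    ((MvPolynomial.aeval (fun i : Fin d => Polynomial.C (c i j0) * Polynomial.X))
      (qPoly d n b c m)).coeff k =
    ∑ γ ∈ (Finset.Icc (0 : Fin d → Fin n → ℕ) fun _ _ => m).filter
      (fun γ => ∑ j, b j * ∑ i, γ i j = m),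
      (if k = ∑ i, ∑ j, γ i j then
        (∏ i, ∏ j, c i j ^ γ i j / ((γ i j).factorial : ℝ)) * ∏ i, c i j0 ^ (∑ j, γ i j)
       else 0) := by
  rw [qPoly, map_sum, Polynomial.finset_sum_coeff]
  refine Finset.sum_congr rfl fun γ hγ => ?_
  rw [map_mul, MvPolynomial.aeval_C, map_prod]
  rw [map_prod]
  simp only [map_pow, MvPolynomial.aeval_X, mul_pow, Finset.prod_mul_distrib,
    Finset.prod_pow_eq_pow_sum]
  simp only [← Polynomial.C_pow]
  simp only [Polynomial.algebraMap_eq]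
  rw [C_prod', C_prod', ← mul_assoc, ← Polynomial.C_mul,
    Polynomial.coeff_C_mul, Polynomial.coeff_X_pow, mul_ite, mul_one, mul_zero]

/-- The polynomials `q_{n,0}, …, q_{n,b_n}` are linearly independent over `ℝ`;
consequently `Q = span{q_{n,m} : m = 0,…,b_n}` has dimension `b_n + 1`. -/
theorem qPoly_linearIndependent_and_finrank
    (d n : ℕ) (hd : 1 ≤ d) (hn : 1 ≤ n)
    (b : Fin n → ℕ) (c : Fin d → Fin n → ℝ)
    (hb1 : b ⟨0, hn⟩ = 1)
    (hb2 : ∀ j : Fin n, 1 ≤ j.val → 2 ≤ b j)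
    (hbmono : ∀ j j' : Fin n, 1 ≤ j.val → j.val < j'.val → b j < b j')
    (hc : ∃ i : Fin d, c i ⟨0, hn⟩ ≠ 0) :
    LinearIndependent ℝ
      (fun m : Fin (b ⟨n - 1, by omega⟩ + 1) => qPoly d n b c m.val) ∧
    Module.finrank ℝ
      (Submodule.span ℝ
        (Set.range (fun m : Fin (b ⟨n - 1, by omega⟩ + 1) => qPoly d n b c m.val)))
      = b ⟨n - 1, by omega⟩ + 1 := by
  classical
  obtain ⟨i0, hi0⟩ := hc
  set j0 : Fin n := ⟨0, hn⟩ with hj0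
  set N : ℕ := b ⟨n - 1, by omega⟩ + 1 with hN
  set S : ℕ → Finset (Fin d → Fin n → ℕ) := fun m =>
    (Finset.Icc (0 : Fin d → Fin n → ℕ) fun _ _ => m).filter
      (fun γ => ∑ j, b j * ∑ i, γ i j = m) with hS
  have hbpos : ∀ j : Fin n, 1 ≤ b j := by
    intro j
    rcases Nat.eq_zero_or_pos j.val with h | h
    · have : j = j0 := Fin.ext h
      rw [this, hb1]
    · have := hb2 j h; omega
  -- total degree bound
  have hsum_le : ∀ (m : ℕ) (γ : Fin d → Fin n → ℕ), γ ∈ S m →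
      ∑ i, ∑ j, γ i j ≤ m := by
    intro m γ hγ
    rw [hS, Finset.mem_filter] at hγ
    rw [Finset.sum_comm, ← hγ.2]
    exact Finset.sum_le_sum fun j _ => Nat.le_mul_of_pos_left _ (hbpos j)
  -- equality case: mass concentrated on j0
  have heq_zero : ∀ (m : ℕ) (γ : Fin d → Fin n → ℕ), γ ∈ S m →
      ∑ i, ∑ j, γ i j = m → ∀ (i : Fin d) (j : Fin n), j ≠ j0 → γ i j = 0 := by
    intro m γ hγ hsum i j hj
    rw [hS, Finset.mem_filter] at hγ
    have hτ := hγ.2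
    have hsum' : ∑ j, ∑ i, γ i j = m := by rw [Finset.sum_comm] at hsum; exact hsum
    have hbs : ∀ j' : Fin n, b j' * ∑ i, γ i j' =
        (∑ i, γ i j') + (b j' - 1) * ∑ i, γ i j' := by
      intro j'
      obtain ⟨t, ht⟩ := Nat.exists_eq_add_of_le (hbpos j')
      rw [ht, Nat.add_sub_cancel_left]; ring
    rw [Finset.sum_congr rfl fun j' _ => hbs j', Finset.sum_add_distrib, hsum'] at hτ
    have hz : ∑ j', (b j' - 1) * ∑ i, γ i j' = 0 := by omega
    have hzj : (b j - 1) * ∑ i, γ i j = 0 :=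
      (Finset.sum_eq_zero_iff.mp hz) j (Finset.mem_univ j)
    have hjval : 1 ≤ j.val := by
      by_contra h
      have hjv : j.val = 0 := by omega
      exact hj (Fin.ext hjv)
    have hbj : 2 ≤ b j := hb2 j hjval
    have hsz : ∑ i, γ i j = 0 := by
      rcases Nat.mul_eq_zero.mp hzj with h | h
      · omega
      · exact h
    exact (Finset.sum_eq_zero_iff.mp hsz) i (Finset.mem_univ i)
  -- the matrix of coefficients
  set φ : MvPolynomial (Fin d) ℝ →ₐ[ℝ] Polynomial ℝ :=
    MvPolynomial.aeval (fun i : Fin d => Polynomial.C (c i j0) * Polynomial.X) with hφ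
  set M : Matrix (Fin N) (Fin N) ℝ :=
    fun k m => (φ (qPoly d n b c m.val)).coeff k.val with hM
  have htri : M.BlockTriangular id := by
    intro k m hkm
    simp only [id] at hkm
    rw [hM]
    simp only
    rw [qPoly_coeff]
    refine Finset.sum_eq_zero fun γ hγ => ?_
    rw [if_neg]
    intro h
    have := hsum_le m.val γ hγ
    omega
  have hdiag : ∀ k : Fin N, 0 < M k k := by
    intro k
    rw [hM]
    simp only
    rw [qPoly_coeff]
    apply Finset.sum_pos'
    · intro γ hγ
      split_ifs with h
      · have hz : ∀ (i : Fin d) (j : Fin n), j ≠ j0 → γ i j = 0 :=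
          heq_zero k.val γ hγ h.symm
        rw [← Finset.prod_mul_distrib]
        apply Finset.prod_nonneg
        intro i _
        have h1 : ∏ j, c i j ^ γ i j / ((γ i j).factorial : ℝ)
            = c i j0 ^ γ i j0 / ((γ i j0).factorial : ℝ) := by
          apply Fintype.prod_eq_single
          intro j hj
          rw [hz i j hj]
          simp
        have h2 : ∑ j, γ i j = γ i j0 := by
          apply Fintype.sum_eq_single
          intro j hj
          exact hz i j hj
        rw [h1, h2, div_mul_eq_mul_div, ← pow_add]
        apply div_nonneg _ (Nat.cast_nonneg _)
        rw [← two_mul, pow_mul]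
        exact pow_nonneg (sq_nonneg _) _
      · exact le_refl 0
    · set g : Fin d → Fin n → ℕ := fun i j => if i = i0 ∧ j = j0 then k.val else 0 with hg
      have hrow : ∀ i : Fin d, (∑ j, g i j) = if i = i0 then k.val else 0 := by
        intro i
        split_ifs with h
        · subst h
          rw [Fintype.sum_eq_single j0 (fun j hj => if_neg (fun hh => hj hh.2))]
          exact if_pos ⟨rfl, rfl⟩
        · exact Finset.sum_eq_zero fun j _ => if_neg (fun hh => h hh.1)
      have hcol : ∀ j : Fin n, (∑ i, g i j) = if j = j0 then k.val else 0 := by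
        intro j
        split_ifs with h
        · subst h
          rw [Fintype.sum_eq_single i0 (fun i hi => if_neg (fun hh => hi hh.1))]
          exact if_pos ⟨rfl, rfl⟩
        · exact Finset.sum_eq_zero fun i _ => if_neg (fun hh => h hh.2)
      have htot : (∑ i, ∑ j, g i j) = k.val := by
        rw [Finset.sum_congr rfl fun i _ => hrow i,
          Fintype.sum_eq_single i0 (fun i hi => if_neg hi), if_pos rfl]
      refine ⟨g, ?_, ?_⟩
      · rw [Finset.mem_filter, Finset.mem_Icc]
        refine ⟨⟨fun i j => Nat.zero_le _, fun i j => ?_⟩, ?_⟩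
        · rw [hg]; dsimp only; split_ifs <;> omega
        · simp only [hcol]
          rw [Fintype.sum_eq_single j0 (fun j hj => by rw [if_neg hj, mul_zero])]
          rw [if_pos rfl, hj0, hb1, one_mul]
      · rw [if_pos htot.symm]
        have h1 : ∀ i : Fin d, (∏ j, (c i j ^ g i j / ((g i j).factorial : ℝ)))
            = if i = i0 then c i j0 ^ k.val / ((k.val).factorial : ℝ) else 1 := by
          intro i
          split_ifs with h
          · subst h
            rw [Fintype.prod_eq_single j0 (fun j hj => by
              rw [hg]; dsimp only; rw [if_neg (fun hh => hj hh.2)]; simp)]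
            rw [hg]; dsimp only; rw [if_pos ⟨rfl, rfl⟩]
          · exact Finset.prod_eq_one fun j _ => by
              rw [hg]; dsimp only; rw [if_neg (fun hh => h hh.1)]; simp
        simp only [h1, hrow]
        rw [Fintype.prod_eq_single i0 (fun i hi => if_neg hi),
          Fintype.prod_eq_single i0 (fun i hi => by rw [if_neg hi, pow_zero])]
        rw [if_pos rfl, if_pos rfl, div_mul_eq_mul_div, ← pow_add, ← two_mul, pow_mul]
        apply div_pos
        · exact pow_pos (by positivity) _
        · exact_mod_cast Nat.factorial_pos _
  have hdet : M.det ≠ 0 := by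
    rw [Matrix.det_of_upperTriangular htri]
    exact Finset.prod_ne_zero_iff.mpr fun k _ => ne_of_gt (hdiag k)
  have hunit : IsUnit M := (Matrix.isUnit_iff_isUnit_det M).mpr (isUnit_iff_ne_zero.mpr hdet)
  have hcols : LinearIndependent ℝ (fun m : Fin N => M.transpose m) :=
    Matrix.linearIndependent_cols_iff_isUnit.mpr hunit
  set L : MvPolynomial (Fin d) ℝ →ₗ[ℝ] (Fin N → ℝ) :=
    LinearMap.pi (fun k : Fin N => (Polynomial.lcoeff ℝ k.val).comp φ.toLinearMap) with hL
  have hcomp : (fun m : Fin N => M.transpose m) = L ∘ (fun m : Fin N => qPoly d n b c m.val) := by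
    funext m
    funext k
    rfl
  rw [hcomp] at hcols
  have hlin : LinearIndependent ℝ (fun m : Fin N => qPoly d n b c m.val) :=
    LinearIndependent.of_comp L hcols
  refine ⟨hlin, ?_⟩
  rw [finrank_span_eq_card hlin, Fintype.card_fin]
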